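/- The complete integral closure of any nontrivial Puiseux monoid is a valuation monoid. -/

import Mathlib

private lemma mem_closure_diff (H : AddSubmonoid ℚ) {x : ℚ}
    (hx : x ∈ AddSubgroup.closure (H : Set ℚ)) :
    ∃ u ∈ H, ∃ v ∈ H, x = u - v := by
  induction hx using AddSubgroup.closure_induction with
  | mem y hy => exact ⟨y, hy, 0, H.zero_mem, by ring⟩
  | zero => exact ⟨0, H.zero_mem, 0, H.zero_mem, by ring⟩
  | add y z _ _ hy hz =>
      obtain ⟨u1, hu1, v1, hv1, e1⟩ := hy
      obtain ⟨u2, hu2, v2, hv2, e2⟩ := hz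
      exact ⟨u1 + u2, H.add_mem hu1 hu2, v1 + v2, H.add_mem hv1 hv2,
        by rw [e1, e2]; ring⟩
  | neg y _ hy =>
      obtain ⟨u, hu, v, hv, e⟩ := hy
      exact ⟨v, hv, u, hu, by rw [e]; ring⟩

private lemma key_lemma (H : AddSubmonoid ℚ)
    (hpos : ∀ y ∈ H, 0 ≤ y) (hnt : ∃ s ∈ H, s ≠ 0)
    {x : ℚ} (hx : x ∈ AddSubgroup.closure (H : Set ℚ)) (hx0 : 0 ≤ x) :
    ∃ c ∈ H, ∀ m : ℕ, c + (m : ℚ) * x ∈ H := by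
  obtain ⟨u, hu, v, hv, hex⟩ := mem_closure_diff H hx
  obtain ⟨s, hs, hs0⟩ := hnt
  have hspos : 0 < s := lt_of_le_of_ne (hpos s hs) (Ne.symm hs0)
  set Pn : ℕ := s.num.toNat with hPndef
  have hsnum : 0 < s.num := Rat.num_pos.2 hspos
  have hPn : 0 < Pn := by omega
  have hPncast : ((Pn : ℚ)) = (s.den : ℚ) * s := by
    have h1 : ((Pn : ℤ) : ℚ) = (s.num : ℚ) := by
      rw [Int.toNat_of_nonneg hsnum.le]
    have h2 : (s.num : ℚ) = (s.den : ℚ) * s := by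
      have := (div_eq_iff (by exact_mod_cast s.den_nz : (s.den:ℚ) ≠ 0)).1 (Rat.num_div_den s)
      rw [this]; ring
    rw [← h2, ← h1]; norm_cast
  have hPq : ((Pn : ℚ)) ∈ H := by
    rw [hPncast]
    have := AddSubmonoid.nsmul_mem H hs s.den
    simpa [nsmul_eq_mul] using this
  set d : ℕ := x.den with hddef
  set e : ℕ := x.num.toNat with hedef
  have hecast : ((e : ℚ)) = (d : ℚ) * x := by
    have hxnum : 0 ≤ x.num := Rat.num_nonneg.2 hx0
    have h1 : ((e : ℤ) : ℚ) = (x.num : ℚ) := by rw [Int.toNat_of_nonneg hxnum]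
    have h2 : (x.num : ℚ) = (x.den : ℚ) * x := by
      have := (div_eq_iff (by exact_mod_cast x.den_nz : (x.den:ℚ) ≠ 0)).1 (Rat.num_div_den x)
      rw [this]; ring
    rw [← h2, ← h1]; norm_cast
  have hd : 0 < d := x.pos
  have hdP : 0 < d * Pn := Nat.mul_pos hd hPn
  refine ⟨((d * Pn : ℕ) : ℚ) * v, ?_, fun m => ?_⟩
  · have := AddSubmonoid.nsmul_mem H hv (d * Pn)
    simpa [nsmul_eq_mul] using this
  · set a : ℕ := m / (d * Pn) with hadef
    set r : ℕ := m % (d * Pn) with hrdef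
    have hm : m = a * (d * Pn) + r := by
      rw [hadef, hrdef, Nat.mul_comm, Nat.div_add_mod]
    have hr : r ≤ d * Pn := (Nat.mod_lt _ hdP).le
    have heq : ((d * Pn : ℕ) : ℚ) * v + (m : ℚ) * x
        = ((d * Pn - r : ℕ) : ℚ) * v + (r : ℚ) * u + ((a * e : ℕ) : ℚ) * (Pn : ℚ) := by
      rw [Nat.cast_sub hr]
      have hmx : (m : ℚ) * x = (a : ℚ) * ((Pn : ℚ) * ((d : ℚ) * x)) + (r : ℚ) * x := by
        rw [hm]; push_cast; ring
      rw [hmx, ← hecast, hex]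
      push_cast; ring
    rw [heq]
    refine H.add_mem (H.add_mem ?_ ?_) ?_
    · have := AddSubmonoid.nsmul_mem H hv (d * Pn - r)
      simpa [nsmul_eq_mul] using this
    · have := AddSubmonoid.nsmul_mem H hu r
      simpa [nsmul_eq_mul] using this
    · have := AddSubmonoid.nsmul_mem H hPq (a * e)
      simpa [nsmul_eq_mul] using this

/-- The complete integral closure of a nontrivial Puiseux monoid is a
valuation monoid. -/
theorem puiseux_cic_valuation (H : AddSubmonoid ℚ)
    (hpos : ∀ x ∈ H, 0 ≤ x) (hnt : ∃ x ∈ H, x ≠ 0) :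
    let cic : Set ℚ := {x ∈ (AddSubgroup.closure (H : Set ℚ) : Set ℚ) |
      ∃ c ∈ H, ∀ m : ℕ, c + (m : ℚ) * x ∈ H}
    ∀ a ∈ cic, ∀ b ∈ cic, (∃ h ∈ cic, a = b + h) ∨ (∃ h ∈ cic, b = a + h) := by
  intro cic a ha b hb
  have hmem : ∀ h : ℚ, h ∈ AddSubgroup.closure (H : Set ℚ) → 0 ≤ h → h ∈ cic :=
    fun h h1 h2 => ⟨h1, key_lemma H hpos hnt h1 h2⟩
  obtain ⟨ha1, -⟩ := ha
  obtain ⟨hb1, -⟩ := hb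
  rcases le_total a b with hab | hab
  · exact Or.inr ⟨b - a, hmem _ (sub_mem hb1 ha1) (by linarith), by ring⟩
  · exact Or.inl ⟨a - b, hmem _ (sub_mem ha1 hb1) (by linarith), by ring⟩
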